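/- For a forward metric space (X,d), the following are equivalent: (i) X is compact; (ii) X is sequentially compact; (iii) X is forward complete and forward totally bounded. -/

import Mathlib

open Set Filter Topology

variable {X : Type*}

/-- Forward ball of an (possibly asymmetric) distance function. -/
def fwdBall (d : X → X → ℝ) (x : X) (r : ℝ) : Set X := {y | d x y < r}

/-- Backward ball. -/
def bwdBall (d : X → X → ℝ) (x : X) (r : ℝ) : Set X := {y | d y x < r}

/-- The forward topology, generated by forward balls. -/
def fwdTop (d : X → X → ℝ) : TopologicalSpace X :=
  TopologicalSpace.generateFrom {s | ∃ x r, s = fwdBall d x r}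

/-- The backward topology, generated by backward balls. -/
def bwdTop (d : X → X → ℝ) : TopologicalSpace X :=
  TopologicalSpace.generateFrom {s | ∃ x r, s = bwdBall d x r}

/-- `d` is an irreversible metric: nonnegative, vanishing exactly on the diagonal, and
satisfying the triangle inequality (symmetry is not required). -/
def IsIrrevMetric (d : X → X → ℝ) : Prop :=
  (∀ x y, 0 ≤ d x y) ∧ (∀ x y, d x y = 0 ↔ x = y) ∧ ∀ x y z, d x z ≤ d x y + d y z

/-- `(X, star, d)` is a pointed forward `Θ`-metric space: `Θ` is nondecreasing with values ≥ 1
and the reversibility of the closure (in the forward topology) of each forward ball of radius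
`r > 0` about `star` is bounded by `Θ r`. -/
def PointedForwardTheta (d : X → X → ℝ) (star : X) (Θ : ℝ → ℝ) : Prop :=
  Monotone Θ ∧ (∀ r, 1 ≤ Θ r) ∧
  ∀ r > 0, ∀ x ∈ @closure X (fwdTop d) (fwdBall d star r),
    ∀ y ∈ @closure X (fwdTop d) (fwdBall d star r), d x y ≤ Θ r * d y x

/-- A forward Cauchy sequence. -/
def FwdCauchy (d : X → X → ℝ) (u : ℕ → X) : Prop :=
  ∀ ε > (0:ℝ), ∃ N : ℕ, ∀ i j : ℕ, N < i → i ≤ j → d (u i) (u j) < ε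

/-- A backward Cauchy sequence. -/
def BwdCauchy (d : X → X → ℝ) (u : ℕ → X) : Prop :=
  ∀ ε > (0:ℝ), ∃ N : ℕ, ∀ i j : ℕ, N < i → i ≤ j → d (u j) (u i) < ε

/-- Forward completeness: every forward Cauchy sequence converges in the forward topology. -/
def FwdComplete (d : X → X → ℝ) : Prop :=
  ∀ u : ℕ → X, FwdCauchy d u → ∃ x : X, Tendsto u atTop (@nhds X (fwdTop d) x)

/-- Backward completeness: every backward Cauchy sequence converges in the forward topology. -/
def BwdComplete (d : X → X → ℝ) : Prop :=
  ∀ u : ℕ → X, BwdCauchy d u → ∃ x : X, Tendsto u atTop (@nhds X (fwdTop d) x)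

/-- Forward total boundedness: a finite forward ε-net exists for each ε > 0. -/
def FwdTotallyBounded (d : X → X → ℝ) : Prop :=
  ∀ ε > (0:ℝ), ∃ s : Finset X, ∀ x : X, ∃ a ∈ s, d a x < ε

/-- Sequential compactness in the forward topology. -/
def FwdSeqCompact (d : X → X → ℝ) : Prop :=
  ∀ u : ℕ → X, ∃ (x : X) (φ : ℕ → ℕ), StrictMono φ ∧
    Tendsto (u ∘ φ) atTop (@nhds X (fwdTop d) x)

namespace Stmt4Aux

variable {d : X → X → ℝ}

lemma isOpen_iff (hd : IsIrrevMetric d) {s : Set X} :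
    IsOpen[fwdTop d] s ↔ ∀ x ∈ s, ∃ ε > 0, ∀ y, d x y < ε → y ∈ s := by
  obtain ⟨h0, heq, htri⟩ := hd
  constructor
  · intro h
    induction h with
    | basic t ht =>
      obtain ⟨z, r, rfl⟩ := ht
      intro x hx
      refine ⟨r - d z x, by simpa [fwdBall] using hx, fun y hy => ?_⟩
      have := htri z x y
      simp only [fwdBall, mem_setOf_eq] at *
      linarith
    | univ => exact fun x _ => ⟨1, one_pos, fun _ _ => trivial⟩
    | inter t₁ t₂ _ _ ih₁ ih₂ =>
      intro x hx
      obtain ⟨ε₁, hε₁, h₁⟩ := ih₁ x hx.1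
      obtain ⟨ε₂, hε₂, h₂⟩ := ih₂ x hx.2
      exact ⟨min ε₁ ε₂, lt_min hε₁ hε₂, fun y hy =>
        ⟨h₁ y (lt_of_lt_of_le hy (min_le_left _ _)), h₂ y (lt_of_lt_of_le hy (min_le_right _ _))⟩⟩
    | sUnion S _ ih =>
      intro x hx
      obtain ⟨t, htS, hxt⟩ := hx
      obtain ⟨ε, hε, h⟩ := ih t htS x hxt
      exact ⟨ε, hε, fun y hy => ⟨t, htS, h y hy⟩⟩
  · intro h
    choose ε hε hball using h
    letI := fwdTop d
    have hs : s = ⋃ x : s, fwdBall d x.1 (ε x.1 x.2) := by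
      ext y
      constructor
      · intro hy
        exact mem_iUnion.2 ⟨⟨y, hy⟩, by simp [fwdBall, (heq y y).2 rfl, hε y hy]⟩
      · intro hy
        obtain ⟨x, hx⟩ := mem_iUnion.1 hy
        exact hball x.1 x.2 y hx
    rw [hs]
    exact isOpen_iUnion fun x => TopologicalSpace.GenerateOpen.basic _ ⟨x.1, _, rfl⟩

lemma mem_nhds (hd : IsIrrevMetric d) {x : X} {s : Set X} :
    s ∈ @nhds X (fwdTop d) x ↔ ∃ ε > 0, ∀ y, d x y < ε → y ∈ s := by
  letI := fwdTop d
  constructor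
  · intro h
    obtain ⟨t, hts, hto, hxt⟩ := mem_nhds_iff.1 h
    obtain ⟨ε, hε, h'⟩ := (isOpen_iff hd).1 hto x hxt
    exact ⟨ε, hε, fun y hy => hts (h' y hy)⟩
  · rintro ⟨ε, hε, h⟩
    refine mem_nhds_iff.2 ⟨fwdBall d x ε, h, ?_, by simp [fwdBall, (hd.2.1 x x).2 rfl, hε]⟩
    exact TopologicalSpace.GenerateOpen.basic _ ⟨x, ε, rfl⟩

lemma tendsto_iff (hd : IsIrrevMetric d) {u : ℕ → X} {x : X} :
    Tendsto u atTop (@nhds X (fwdTop d) x) ↔ ∀ ε > 0, ∃ N, ∀ n ≥ N, d x (u n) < ε := by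
  rw [tendsto_atTop']
  constructor
  · intro h ε hε
    exact h (fwdBall d x ε) ((mem_nhds hd).2 ⟨ε, hε, fun y hy => hy⟩)
  · intro h s hs
    obtain ⟨ε, hε, hb⟩ := (mem_nhds hd).1 hs
    obtain ⟨N, hN⟩ := h ε hε
    exact ⟨N, fun n hn => hb _ (hN n hn)⟩


lemma P1 (hd : IsIrrevMetric d) (hsc : FwdSeqCompact d) : FwdComplete d := by
  intro u hu
  obtain ⟨x, φ, hφ, hx⟩ := hsc u
  refine ⟨x, (tendsto_iff hd).2 fun ε hε => ?_⟩
  obtain ⟨N, hN⟩ := hu (ε/2) (half_pos hε)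
  obtain ⟨K, hK⟩ := (tendsto_iff hd).1 hx (ε/2) (half_pos hε)
  set k := max K (N+1) with hk
  have hφk : N < φ k := lt_of_lt_of_le (Nat.lt_of_succ_le (le_max_right K (N+1))) hφ.le_apply
  refine ⟨φ k, fun n hn => ?_⟩
  have h1 : d x (u (φ k)) < ε/2 := hK k (le_max_left _ _)
  have h2 : d (u (φ k)) (u n) < ε/2 := hN (φ k) n hφk hn
  have := hd.2.2 x (u (φ k)) (u n)
  linarith

lemma P2 (hd : IsIrrevMetric d) (star : X) (Θ : ℝ → ℝ) (hΘ : PointedForwardTheta d star Θ)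
    (hsc : FwdSeqCompact d) : FwdTotallyBounded d := by
  classical
  by_contra htb
  simp only [FwdTotallyBounded, not_forall, not_exists] at htb
  obtain ⟨ε, hε, hsep⟩ := htb
  push_neg at hsep
  choose pick hpick using hsep
  set F : ℕ → Finset X := fun n => Nat.rec ∅ (fun _ s => insert (pick s) s) n with hF
  set u : ℕ → X := fun n => pick (F n) with hu
  have hstep : ∀ n, F n ⊆ F (n+1) := fun n => Finset.subset_insert _ _
  have hmono : ∀ i j, i ≤ j → F i ⊆ F j := fun i j hij =>
    Finset.coe_subset.1 (by
      have : Monotone fun n => (F n : Set X) := monotone_nat_of_le_succ fun n => hstep n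
      exact_mod_cast this hij)
  have hmem : ∀ i j, i < j → u i ∈ F j := fun i j hij =>
    hmono (i+1) j hij (Finset.mem_insert_self _ _)
  have hsepu : ∀ i j, i < j → ε ≤ d (u i) (u j) := fun i j hij =>
    hpick (F j) (u i) (hmem i j hij)
  obtain ⟨x, φ, hφ, hx⟩ := hsc u
  set R := d star x + 1 with hR
  have hR0 : 0 < R := by have := hd.1 star x; linarith
  set C := Θ R with hC
  have hC1 : 1 ≤ C := hΘ.2.1 R
  set ε' := min (ε / (C+1)) 1 with hε'def
  have hε' : 0 < ε' := lt_min (div_pos hε (by linarith)) one_pos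
  obtain ⟨N, hN⟩ := (tendsto_iff hd).1 hx ε' hε'
  letI := fwdTop d
  have hxball : x ∈ fwdBall d star R := by simp [fwdBall, hR]
  have hball : ∀ n ≥ N, (u ∘ φ) n ∈ fwdBall d star R := fun n hn => by
    have h1 := hN n hn
    have h2 := hd.2.2 star x ((u ∘ φ) n)
    have h3 : ε' ≤ 1 := min_le_right _ _
    simp only [fwdBall, mem_setOf_eq, hR]
    have : d x ((u ∘ φ) n) < 1 := lt_of_lt_of_le h1 h3
    linarith
  have hrev : d ((u ∘ φ) N) x ≤ C * d x ((u ∘ φ) N) :=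
    hΘ.2.2 R hR0 _ (subset_closure (hball N le_rfl)) x (subset_closure hxball)
  have hkey : ε ≤ d (u (φ N)) (u (φ (N+1))) := hsepu _ _ (hφ (Nat.lt_succ_self N))
  have htri := hd.2.2 (u (φ N)) x (u (φ (N+1)))
  have h1 : d x ((u ∘ φ) N) < ε' := hN N le_rfl
  have h2 : d x ((u ∘ φ) (N+1)) < ε' := hN (N+1) (Nat.le_succ N)
  have h3 : C * d x ((u ∘ φ) N) ≤ C * ε' := by
    apply mul_le_mul_of_nonneg_left (le_of_lt h1) (by linarith)
  have h4 : (C+1) * ε' ≤ ε := by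
    have := min_le_left (ε / (C+1)) 1
    calc (C+1) * ε' ≤ (C+1) * (ε / (C+1)) := by
          apply mul_le_mul_of_nonneg_left this (by linarith)
      _ = ε := by field_simp
  simp only [Function.comp_apply] at hrev h1 h2 h3
  nlinarith

lemma bounded_of_tb (hd : IsIrrevMetric d) (star : X) (htb : FwdTotallyBounded d) :
    ∃ R > 0, ∀ x, d star x < R := by
  obtain ⟨s, hs⟩ := htb 1 one_pos
  obtain ⟨M, hM⟩ := (s.image (d star)).exists_le
  obtain ⟨a, ha, _⟩ := hs star
  have hM0 : 0 ≤ M := le_trans (hd.1 star a) (hM _ (Finset.mem_image_of_mem _ ha))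
  refine ⟨M + 1, by linarith, fun x => ?_⟩
  obtain ⟨b, hb, hbx⟩ := hs x
  have := hd.2.2 star b x
  have := hM _ (Finset.mem_image_of_mem (d star) hb)
  linarith

lemma global_rev (hd : IsIrrevMetric d) (star : X) (Θ : ℝ → ℝ)
    (hΘ : PointedForwardTheta d star Θ) {R : ℝ} (hR0 : 0 < R) (hR : ∀ x, d star x < R) :
    ∀ x y, d x y ≤ Θ R * d y x := by
  intro x y
  letI := fwdTop d
  exact hΘ.2.2 R hR0 x (subset_closure (hR x)) y (subset_closure (hR y))

/-- The symmetrised metric, when reversibility is globally bounded by `C`. -/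
noncomputable def symM (d : X → X → ℝ) (hd : IsIrrevMetric d) (C : ℝ) (hC1 : 1 ≤ C)
    (hC : ∀ x y, d x y ≤ C * d y x) : MetricSpace X :=
  letI := fwdTop d
  MetricSpace.ofDistTopology (fun x y => d x y + d y x)
    (fun x => by simp [(hd.2.1 x x).2 rfl])
    (fun x y => by ring)
    (fun x y z => by have h1 := hd.2.2 x y z; have h2 := hd.2.2 z y x; linarith)
    (fun s => by
      rw [isOpen_iff hd]
      constructor
      · intro h x hx
        obtain ⟨ε, hε, hb⟩ := h x hx
        refine ⟨ε, hε, fun y hy => hb y ?_⟩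
        have := hd.1 y x
        linarith
      · intro h x hx
        obtain ⟨ε, hε, hb⟩ := h x hx
        refine ⟨ε / (1 + C), div_pos hε (by linarith), fun y hy => hb y ?_⟩
        have h1 := hC y x
        have h2 : d x y + d y x ≤ (1 + C) * d x y := by nlinarith
        calc d x y + d y x ≤ (1 + C) * d x y := h2
          _ < (1 + C) * (ε / (1 + C)) := by
              apply mul_lt_mul_of_pos_left hy (by linarith)
          _ = ε := by field_simp)
    (fun x y hxy => by
      have h1 := hd.1 x y
      have h2 := hd.1 y x
      exact (hd.2.1 x y).1 (by linarith))

lemma symM_top (hd : IsIrrevMetric d) (C : ℝ) (hC1 : 1 ≤ C)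
    (hC : ∀ x y, d x y ≤ C * d y x) :
    (symM d hd C hC1 hC).toUniformSpace.toTopologicalSpace = fwdTop d := rfl

lemma symM_dist (hd : IsIrrevMetric d) (C : ℝ) (hC1 : 1 ≤ C)
    (hC : ∀ x y, d x y ≤ C * d y x) (x y : X) :
    @dist X (symM d hd C hC1 hC).toDist x y = d x y + d y x := rfl

/-- Under a global reversibility bound, forward complete + forward totally bounded implies
compactness of the forward topology. -/
lemma P3 (hd : IsIrrevMetric d) (star : X) (Θ : ℝ → ℝ) (hΘ : PointedForwardTheta d star Θ)
    (hcpl : FwdComplete d) (htb : FwdTotallyBounded d) : @CompactSpace X (fwdTop d) := by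
  obtain ⟨R, hR0, hR⟩ := bounded_of_tb hd star htb
  set C := Θ R with hCdef
  have hC1 : 1 ≤ C := hΘ.2.1 R
  have hC : ∀ x y, d x y ≤ C * d y x := global_rev hd star Θ hΘ hR0 hR
  letI m := symM d hd C hC1 hC
  have hdist : ∀ x y : X, dist x y = d x y + d y x := fun x y => rfl
  have hcomplete : CompleteSpace X := by
    apply Metric.complete_of_cauchySeq_tendsto
    intro u hu
    have hfc : FwdCauchy d u := by
      intro ε hε
      obtain ⟨N, hN⟩ := (Metric.cauchySeq_iff.1 hu) ε hε
      refine ⟨N, fun i j hi hij => ?_⟩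
      have := hN i (le_of_lt hi) j (le_trans (le_of_lt hi) hij)
      rw [hdist] at this
      have := hd.1 (u j) (u i)
      linarith
    obtain ⟨x, hx⟩ := hcpl u hfc
    exact ⟨x, hx⟩
  have htb' : TotallyBounded (univ : Set X) := by
    rw [Metric.totallyBounded_iff]
    intro ε hε
    obtain ⟨s, hs⟩ := htb (ε / (1 + C)) (div_pos hε (by linarith))
    refine ⟨(s : Set X), s.finite_toSet, fun x _ => ?_⟩
    obtain ⟨a, ha, hax⟩ := hs x
    refine mem_iUnion₂.2 ⟨a, ha, ?_⟩
    rw [Metric.mem_ball, dist_comm, hdist]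
    have h1 := hC x a
    calc d a x + d x a ≤ (1 + C) * d a x := by nlinarith
      _ < (1 + C) * (ε / (1 + C)) := mul_lt_mul_of_pos_left hax (by linarith)
      _ = ε := by field_simp
  have : CompactSpace X :=
    ⟨isCompact_iff_totallyBounded_isComplete.2 ⟨htb', completeSpace_iff_isComplete_univ.1 hcomplete⟩⟩
  exact this

/-- Compactness of the forward topology implies forward sequential compactness. -/
lemma P4 (hd : IsIrrevMetric d) (star : X) (Θ : ℝ → ℝ) (hΘ : PointedForwardTheta d star Θ)
    (hcpt : @CompactSpace X (fwdTop d)) : FwdSeqCompact d := by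
  letI := fwdTop d
  have hopen : ∀ n : ℕ, IsOpen (fwdBall d star n) :=
    fun n => TopologicalSpace.GenerateOpen.basic _ ⟨star, (n : ℝ), rfl⟩
  have hcover : (univ : Set X) ⊆ ⋃ n : ℕ, fwdBall d star n := fun x _ =>
    mem_iUnion.2 ⟨⌈d star x⌉₊ + 1, by
      simp only [fwdBall, mem_setOf_eq, Nat.cast_add, Nat.cast_one]
      have := Nat.le_ceil (d star x)
      linarith⟩
  obtain ⟨t, ht⟩ := hcpt.isCompact_univ.elim_finite_subcover
    (fun n : ℕ => fwdBall d star n) hopen hcover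
  have hR : ∀ x, d star x < (t.sup id : ℕ) + 1 := by
    intro x
    obtain ⟨n, hn, hx⟩ := mem_iUnion₂.1 (ht (mem_univ x))
    have h1 : (n : ℝ) ≤ (t.sup id : ℕ) := Nat.cast_le.2 (Finset.le_sup (f := id) hn)
    simp only [fwdBall, mem_setOf_eq] at hx
    linarith
  set R : ℝ := (t.sup id : ℕ) + 1 with hRdef
  have hR0 : 0 < R := by positivity
  set C := Θ R with hCdef
  have hC1 : 1 ≤ C := hΘ.2.1 R
  have hC : ∀ x y, d x y ≤ C * d y x := global_rev hd star Θ hΘ hR0 hR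
  letI m := symM d hd C hC1 hC
  have hseq : SeqCompactSpace X := (@compactSpace_iff_seqCompactSpace X (fwdTop d)
    (inferInstance : @TopologicalSpace.PseudoMetrizableSpace X m.toUniformSpace.toTopologicalSpace)).1 hcpt
  intro u
  obtain ⟨x, φ, hφ, hx⟩ := SeqCompactSpace.tendsto_subseq u
  exact ⟨x, φ, hφ, hx⟩

end Stmt4Aux



/-- For a forward metric space `(X,d)` (a pointed forward Θ-metric space),
the following are equivalent: (i) `X` is compact; (ii) `X` is sequentially compact; (iii) `X`
is forward complete and forward totally bounded. -/
theorem stmt4 (d : X → X → ℝ) (hd : IsIrrevMetric d) (star : X) (Θ : ℝ → ℝ)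
    (hΘ : PointedForwardTheta d star Θ) :
    (@CompactSpace X (fwdTop d) ↔ FwdSeqCompact d) ∧
    (FwdSeqCompact d ↔ (FwdComplete d ∧ FwdTotallyBounded d)) := by
  have p1 := Stmt4Aux.P1 hd
  have p2 := Stmt4Aux.P2 hd star Θ hΘ
  have p3 := Stmt4Aux.P3 hd star Θ hΘ
  have p4 := Stmt4Aux.P4 hd star Θ hΘ
  exact ⟨⟨p4, fun h => p3 (p1 h) (p2 h)⟩,
    ⟨fun h => ⟨p1 h, p2 h⟩, fun h => p4 (p3 h.1 h.2)⟩⟩
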